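/- Fix τ ∈ ℂ with Im τ ≠ 0, let Λ = {m + n·τ : m, n ∈ ℤ}, and let p, q ∈ ℂ with p − q ∉ Λ. Let f, g : ℂ → ℂ be Λ-elliptic functions such that: f is analytic at every z ∉ p + Λ and meromorphicOrderAt f z = −2 for every z ∈ p + Λ; g is analytic at every z ∉ q + Λ and meromorphicOrderAt g z = −2 for every z ∈ q + Λ. Suppose a, b, c, d ∈ ℂ with c ≠ 0 satisfy f(z)·(c·g(z) + d) = a·g(z) + b for all z ∉ (p + Λ) ∪ (q + Λ). Then the function h(z) = c·g(z) + d satisfies: meromorphicOrderAt h z = 2 for every z ∈ p + Λ, meromorphicOrderAt h z = −2 for every z ∈ q + Λ, and meromorphicOrderAt h z = 0 for every other z ∈ ℂ. -/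

import Mathlib

-- The order of a meromorphic function at a point, as an element of `ℤ ∪ {∞}`
-- (junk value `0` if the function is not meromorphic at the point).
open Classical in
noncomputable def meromorphicOrderAt' (f : ℂ → ℂ) (x : ℂ) : WithTop ℤ :=
  if h : MeromorphicAt f x then
    ((analyticOrderAt (fun z ↦ (z - x) ^ h.choose • f z) x).map (↑· : ℕ → ℤ)) - h.choose
  else 0

/-- The lattice `Λ = {m + n·τ : m, n ∈ ℤ}` generated by `1` and `τ`. -/
def latticeSet (τ : ℂ) : Set ℂ := {z | ∃ m n : ℤ, z = (m : ℂ) + (n : ℂ) * τ}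

/-- A function `h : ℂ → ℂ` is `Λ`-elliptic (for the lattice generated by `1` and `τ`)
if it is meromorphic on all of `ℂ` and doubly periodic with periods `1` and `τ`. -/
def IsElliptic (τ : ℂ) (h : ℂ → ℂ) : Prop :=
  MeromorphicOn h Set.univ ∧ (∀ z, h (z + 1) = h z) ∧ (∀ z, h (z + τ) = h z)

open Filter Topology

noncomputable def MeromorphicAt.order {f : ℂ → ℂ} {x : ℂ} (_hf : MeromorphicAt f x) :
    WithTop ℤ := meromorphicOrderAt f x

lemma MeromorphicAt.order_eq_top_iff {f : ℂ → ℂ} {x : ℂ} (hf : MeromorphicAt f x) :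
    hf.order = ⊤ ↔ ∀ᶠ z in 𝓝[≠] x, f z = 0 := meromorphicOrderAt_eq_top_iff

lemma MeromorphicAt.order_eq_int_iff {f : ℂ → ℂ} {x : ℂ} (hf : MeromorphicAt f x) (n : ℤ) :
    hf.order = n ↔ ∃ g : ℂ → ℂ, AnalyticAt ℂ g x ∧ g x ≠ 0 ∧
      ∀ᶠ z in 𝓝[≠] x, f z = (z - x) ^ n • g z := meromorphicOrderAt_eq_int_iff hf

noncomputable def AnalyticAt.order {f : ℂ → ℂ} {x : ℂ} (_hf : AnalyticAt ℂ f x) : ENat :=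
  analyticOrderAt f x

lemma AnalyticAt.order_eq_nat_iff {f : ℂ → ℂ} {x : ℂ} (hf : AnalyticAt ℂ f x) (n : ℕ) :
    hf.order = n ↔ ∃ g : ℂ → ℂ, AnalyticAt ℂ g x ∧ g x ≠ 0 ∧
      ∀ᶠ z in 𝓝 x, f z = (z - x) ^ n • g z := hf.analyticOrderAt_eq_natCast

lemma AnalyticAt.meromorphicAt_order {f : ℂ → ℂ} {x : ℂ} (hf : AnalyticAt ℂ f x) :
    hf.meromorphicAt.order = WithTop.map (Nat.cast : ℕ → ℤ) hf.order := hf.meromorphicOrderAt_eq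

lemma meromorphicOrderAt_eq {f : ℂ → ℂ} {z : ℂ} (hf : MeromorphicAt f z) :
    meromorphicOrderAt' f z = hf.order := rfl

lemma an_order_zero_iff {f : ℂ → ℂ} {z : ℂ} (hf : AnalyticAt ℂ f z) :
    hf.order = 0 ↔ f z ≠ 0 := by
  rw [show (0 : ENat) = ((0 : ℕ) : ENat) from rfl, hf.order_eq_nat_iff]
  constructor
  · rintro ⟨g, hg, hgz, hfg⟩
    have h := hfg.self_of_nhds
    simp only [sub_self, pow_zero, one_smul] at h
    rw [h]; exact hgz
  · intro h
    exact ⟨f, hf, h, by filter_upwards with w; simp⟩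

lemma an_mero_order_zero {f : ℂ → ℂ} {z : ℂ} (hf : AnalyticAt ℂ f z) (h : f z ≠ 0) :
    hf.meromorphicAt.order = 0 := by
  rw [hf.meromorphicAt_order, (an_order_zero_iff hf).mpr h]
  rfl

lemma an_mero_order_nonneg {f : ℂ → ℂ} {z : ℂ} (hf : AnalyticAt ℂ f z) :
    0 ≤ hf.meromorphicAt.order := by
  rw [hf.meromorphicAt_order]
  rcases eq_or_ne hf.order ⊤ with h | h
  · rw [h]; exact le_top
  · obtain ⟨n, hn⟩ := WithTop.ne_top_iff_exists.mp h
    rw [← hn, WithTop.map_coe]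
    exact_mod_cast Int.ofNat_nonneg n

lemma mero_order_congr {f g : ℂ → ℂ} {z : ℂ} (hf : MeromorphicAt f z) (hg : MeromorphicAt g z)
    (h : ∀ᶠ w in 𝓝[≠] z, f w = g w) : hf.order = hg.order := by
  rcases eq_or_ne hg.order ⊤ with h2 | h2
  · rw [h2, hf.order_eq_top_iff]
    filter_upwards [hg.order_eq_top_iff.mp h2, h] with w e1 e2
    rw [e2, e1]
  · obtain ⟨n, hn⟩ := WithTop.ne_top_iff_exists.mp h2
    obtain ⟨G, hG, hGz, hGeq⟩ := (hg.order_eq_int_iff n).mp hn.symm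
    rw [← hn, hf.order_eq_int_iff]
    exact ⟨G, hG, hGz, by filter_upwards [h, hGeq] with w e1 e2; rw [e1, e2]⟩

lemma mero_order_mul {f g : ℂ → ℂ} {z : ℂ} (hf : MeromorphicAt f z) (hg : MeromorphicAt g z)
    (hfg : MeromorphicAt (fun w => f w * g w) z) :
    hfg.order = hf.order + hg.order := by
  rcases eq_or_ne hf.order ⊤ with h1 | h1
  · rw [h1, top_add, hfg.order_eq_top_iff]
    filter_upwards [hf.order_eq_top_iff.mp h1] with w e1
    simp [e1]
  rcases eq_or_ne hg.order ⊤ with h2 | h2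
  · rw [h2, add_top, hfg.order_eq_top_iff]
    filter_upwards [hg.order_eq_top_iff.mp h2] with w e1
    simp [e1]
  obtain ⟨m, hm⟩ := WithTop.ne_top_iff_exists.mp h1
  obtain ⟨n, hn⟩ := WithTop.ne_top_iff_exists.mp h2
  obtain ⟨F, hF, hFz, hFeq⟩ := (hf.order_eq_int_iff m).mp hm.symm
  obtain ⟨G, hG, hGz, hGeq⟩ := (hg.order_eq_int_iff n).mp hn.symm
  rw [← hm, ← hn, ← WithTop.coe_add, hfg.order_eq_int_iff]
  refine ⟨fun w => F w * G w, hF.mul hG, mul_ne_zero hFz hGz, ?_⟩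
  filter_upwards [hFeq, hGeq, self_mem_nhdsWithin] with w e1 e2 (e3 : w ≠ z)
  have hw : w - z ≠ 0 := sub_ne_zero.mpr e3
  simp only [smul_eq_mul] at *
  rw [e1, e2, zpow_add₀ hw]; ring

lemma mero_eventually_ne {f : ℂ → ℂ} {z : ℂ} (hf : MeromorphicAt f z) (n : ℤ)
    (h : hf.order = n) : ∀ᶠ w in 𝓝[≠] z, f w ≠ 0 := by
  obtain ⟨G, hG, hGz, hGeq⟩ := (hf.order_eq_int_iff n).mp h
  filter_upwards [hGeq, (hG.continuousAt.eventually_ne hGz).filter_mono nhdsWithin_le_nhds,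
    self_mem_nhdsWithin] with w e1 e2 (e3 : w ≠ z)
  rw [e1]
  exact smul_ne_zero (zpow_ne_zero _ (sub_ne_zero.mpr e3)) e2

lemma lat_small {τ : ℂ} (hτ : τ.im ≠ 0) {z : ℂ} (hz : z ∈ latticeSet τ)
    (h : ‖z‖ < min 1 |τ.im|) : z = 0 := by
  obtain ⟨m, n, rfl⟩ := hz
  have him : ((m : ℂ) + (n : ℂ) * τ).im = (n : ℝ) * τ.im := by simp
  have h1 : |(n : ℝ)| * |τ.im| < |τ.im| := by
    calc |(n : ℝ)| * |τ.im| = |((m : ℂ) + (n : ℂ) * τ).im| := by rw [him, abs_mul]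
    _ ≤ ‖(m : ℂ) + (n : ℂ) * τ‖ := Complex.abs_im_le_norm _
    _ < |τ.im| := lt_of_lt_of_le h (min_le_right _ _)
  have hτ' : 0 < |τ.im| := abs_pos.mpr hτ
  have hn : |(n : ℝ)| < 1 := by
    by_contra hcon
    push_neg at hcon
    nlinarith
  have hn0 : n = 0 := by
    have h2 : |n| < 1 := by exact_mod_cast (by rwa [← Int.cast_abs] at hn : ((|n| : ℤ) : ℝ) < 1)
    have := abs_lt.mp h2; omega
  subst hn0
  simp only [Int.cast_zero, zero_mul, add_zero] at h ⊢
  have hm : |(m : ℝ)| < 1 := by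
    rw [← Complex.norm_intCast]
    exact lt_of_lt_of_le h (min_le_left _ _)
  have : m = 0 := by
    have h2 : |m| < 1 := by exact_mod_cast (by rwa [← Int.cast_abs] at hm : ((|m| : ℤ) : ℝ) < 1)
    have := abs_lt.mp h2; omega
  simp [this]

lemma lat_sub {τ : ℂ} {z w : ℂ} (hz : z ∈ latticeSet τ) (hw : w ∈ latticeSet τ) :
    z - w ∈ latticeSet τ := by
  obtain ⟨m1, n1, rfl⟩ := hz
  obtain ⟨m2, n2, rfl⟩ := hw
  exact ⟨m1 - m2, n1 - n2, by push_cast; ring⟩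

lemma lat_closed {τ : ℂ} (hτ : τ.im ≠ 0) (cst : ℂ) {z : ℂ} (hz : z - cst ∉ latticeSet τ) :
    ∀ᶠ w in 𝓝 z, w - cst ∉ latticeSet τ := by
  by_contra hcon
  rw [Filter.not_eventually] at hcon
  set δ := min 1 |τ.im| with hδdef
  have hδ : 0 < δ := lt_min one_pos (abs_pos.mpr hτ)
  obtain ⟨w₁, hw₁lat, hw₁ball⟩ :=
    (hcon.and_eventually (Filter.eventually_of_mem (Metric.ball_mem_nhds z (half_pos hδ)) (fun x hx => hx))).exists
  rw [not_not] at hw₁lat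
  have hw₁ne : w₁ ≠ z := fun h => hz (h ▸ hw₁lat)
  have hd1 : 0 < dist w₁ z := dist_pos.mpr hw₁ne
  obtain ⟨w₂, hw₂lat, hw₂ball⟩ :=
    (hcon.and_eventually (Filter.eventually_of_mem (Metric.ball_mem_nhds z (lt_min (half_pos hδ) hd1)) (fun x hx => hx))).exists
  rw [not_not] at hw₂lat
  have hd2 : dist w₂ z < dist w₁ z := lt_of_lt_of_le (Metric.mem_ball.mp hw₂ball) (min_le_right _ _)
  have hne : w₁ ≠ w₂ := fun h => absurd hd2 (by rw [h]; exact lt_irrefl _)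
  have hsub : w₁ - w₂ ∈ latticeSet τ := by
    have := lat_sub hw₁lat hw₂lat
    simpa using this
  have habs : ‖w₁ - w₂‖ < δ := by
    have e1 : dist w₁ z < δ / 2 := Metric.mem_ball.mp hw₁ball
    have e2 : dist w₂ z < δ / 2 := lt_of_lt_of_le (Metric.mem_ball.mp hw₂ball) (min_le_left _ _)
    calc ‖w₁ - w₂‖ = dist w₁ w₂ := (Complex.dist_eq _ _).symm
    _ ≤ dist w₁ z + dist z w₂ := dist_triangle _ _ _
    _ < δ / 2 + δ / 2 := by rw [dist_comm z w₂]; exact add_lt_add e1 e2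
    _ = δ := by ring
  exact hne (sub_eq_zero.mp (lat_small hτ hsub habs))

lemma lat_discrete {τ : ℂ} (hτ : τ.im ≠ 0) (cst : ℂ) (z : ℂ) :
    ∀ᶠ w in 𝓝[≠] z, w - cst ∉ latticeSet τ := by
  by_cases hz : z - cst ∈ latticeSet τ
  · set δ := min 1 |τ.im| with hδdef
    have hδ : 0 < δ := lt_min one_pos (abs_pos.mpr hτ)
    rw [eventually_nhdsWithin_iff]
    filter_upwards [Filter.eventually_of_mem (Metric.ball_mem_nhds z hδ) (fun x hx => hx)] with w hw hwne hwlat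
    have hsub : w - z ∈ latticeSet τ := by
      have := lat_sub hwlat hz
      simpa using this
    have : ‖w - z‖ < δ := by rw [← Complex.dist_eq]; exact Metric.mem_ball.mp hw
    exact (Set.mem_compl_singleton_iff.mpr hwne : w ≠ z) (sub_eq_zero.mp (lat_small hτ hsub this))
  · exact (lat_closed hτ cst hz).filter_mono nhdsWithin_le_nhds

lemma lat_countable (τ : ℂ) : (latticeSet τ).Countable := by
  apply Set.Countable.mono _ (Set.countable_range (fun mn : ℤ × ℤ => (mn.1 : ℂ) + (mn.2 : ℂ) * τ))
  rintro z ⟨m, n, hz⟩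
  exact ⟨(m, n), hz.symm⟩
/-- Claim 4 of Proposition 3.9: if two degree-two elliptic functions `f` (double poles on
`p + Λ`) and `g` (double poles on `q + Λ`) satisfy `f * (c * g + d) = a * g + b` with
`c ≠ 0`, then `h = c * g + d` has divisor `2p - 2q`. -/
theorem divisor_of_mobius_factor (τ : ℂ) (hτ : τ.im ≠ 0) (p q : ℂ)
    (hpq : p - q ∉ latticeSet τ)
    (f g : ℂ → ℂ) (hf : IsElliptic τ f) (hg : IsElliptic τ g)
    (hfan : ∀ z : ℂ, z - p ∉ latticeSet τ → AnalyticAt ℂ f z)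
    (hford : ∀ z : ℂ, z - p ∈ latticeSet τ →
      meromorphicOrderAt' f z = ((-2 : ℤ) : WithTop ℤ))
    (hgan : ∀ z : ℂ, z - q ∉ latticeSet τ → AnalyticAt ℂ g z)
    (hgord : ∀ z : ℂ, z - q ∈ latticeSet τ →
      meromorphicOrderAt' g z = ((-2 : ℤ) : WithTop ℤ))
    (a b c d : ℂ) (hc : c ≠ 0)
    (hrel : ∀ z : ℂ, z - p ∉ latticeSet τ → z - q ∉ latticeSet τ →
      f z * (c * g z + d) = a * g z + b) :
    (∀ z : ℂ, z - p ∈ latticeSet τ →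
      meromorphicOrderAt' (fun w => c * g w + d) z = ((2 : ℤ) : WithTop ℤ)) ∧
    (∀ z : ℂ, z - q ∈ latticeSet τ →
      meromorphicOrderAt' (fun w => c * g w + d) z = ((-2 : ℤ) : WithTop ℤ)) ∧
    (∀ z : ℂ, z - p ∉ latticeSet τ → z - q ∉ latticeSet τ →
      meromorphicOrderAt' (fun w => c * g w + d) z = 0) := by
  have hgm : ∀ z : ℂ, MeromorphicAt g z := fun z => hg.1 z (Set.mem_univ z)
  have hfm : ∀ z : ℂ, MeromorphicAt f z := fun z => hf.1 z (Set.mem_univ z)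
  have hhm : ∀ z : ℂ, MeromorphicAt (fun w => c * g w + d) z := fun z =>
    ((MeromorphicAt.const c z).mul (hgm z)).add (MeromorphicAt.const d z)
  have hhan : ∀ z : ℂ, z - q ∉ latticeSet τ → AnalyticAt ℂ (fun w => c * g w + d) z :=
    fun z hz => (analyticAt_const.mul (hgan z hz)).add analyticAt_const
  -- Part 2: order of h at q-lattice points is -2
  have part2 : ∀ z : ℂ, z - q ∈ latticeSet τ → (hhm z).order = ((-2 : ℤ) : WithTop ℤ) := by
    intro z hz
    have hgord' : (hgm z).order = ((-2 : ℤ) : WithTop ℤ) := by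
      have := hgord z hz
      rwa [meromorphicOrderAt_eq (hgm z)] at this
    obtain ⟨G, hG, hGz, hGeq⟩ := ((hgm z).order_eq_int_iff (-2)).mp hgord'
    rw [(hhm z).order_eq_int_iff (-2)]
    refine ⟨fun w => c * G w + d * (w - z) ^ 2,
      (analyticAt_const.mul hG).add
        (analyticAt_const.mul (((analyticAt_id).sub analyticAt_const).pow 2)), by simpa using mul_ne_zero hc hGz, ?_⟩
    filter_upwards [hGeq, self_mem_nhdsWithin] with w e1 (e2 : w ≠ z)
    have hw : w - z ≠ 0 := sub_ne_zero.mpr e2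
    rw [e1]
    simp only [smul_eq_mul, zpow_neg, zpow_two, pow_two]
    field_simp [hw]
  -- Key: a * d ≠ b * c
  have key : a * d ≠ b * c := by
    intro hadbc
    have hq0 : q - q ∈ latticeSet τ := ⟨0, 0, by simp⟩
    have horder : (hhm q).order = ((-2 : ℤ) : WithTop ℤ) := part2 q hq0
    have hne := mero_eventually_ne (hhm q) (-2) horder
    have hfeq : ∀ᶠ w in 𝓝[≠] q, f w = a / c ∧ w - p ∉ latticeSet τ := by
      filter_upwards [hne, lat_discrete hτ p q, lat_discrete hτ q q] with w h1 h2 h3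
      refine ⟨?_, h2⟩
      have hr := hrel w h2 h3
      have h4 : (f w - a / c) * (c * g w + d) = 0 := by
        field_simp
        linear_combination c * hr - hadbc
      rcases mul_eq_zero.mp h4 with h5 | h5
      · exact sub_eq_zero.mp h5
      · exact absurd h5 h1
    obtain ⟨O, hOo, hqO, hOsub⟩ := mem_nhdsWithin.mp hfeq
    obtain ⟨r, hr, hball⟩ := Metric.isOpen_iff.mp hOo q hqO
    set w₀ : ℂ := q + (r / 2 : ℝ) with hw₀def
    have hw₀ne : w₀ ≠ q := by
      simp only [hw₀def, ne_eq, add_eq_left]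
      exact_mod_cast (by positivity : (r / 2 : ℝ) ≠ 0)
    have hw₀O : w₀ ∈ O := by
      apply hball
      simp only [Metric.mem_ball, hw₀def, Complex.dist_eq, add_sub_cancel_left]
      rw [Complex.norm_real, Real.norm_eq_abs]
      rw [abs_of_pos (by positivity)]
      linarith
    have hw₀T : f w₀ = a / c ∧ w₀ - p ∉ latticeSet τ := hOsub ⟨hw₀O, hw₀ne⟩
    -- identity theorem on U' = complement of p + Λ
    set S : Set ℂ := {w : ℂ | w - p ∈ latticeSet τ} with hSdef
    have hScount : S.Countable := by
      have : S ⊆ (fun l => l + p) '' latticeSet τ := by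
        rintro w hw
        exact ⟨w - p, hw, by ring⟩
      exact Set.Countable.mono this ((lat_countable τ).image _)
    have hSopen : IsOpen Sᶜ := by
      rw [isOpen_iff_mem_nhds]
      intro z hz
      exact lat_closed hτ p hz
    have hSpre : IsPreconnected Sᶜ := by
      have h1 : (1 : Cardinal) < Module.rank ℝ ℂ := by
        rw [Complex.rank_real_complex]; norm_num
      exact (hScount.isPathConnected_compl_of_one_lt_rank h1).isConnected.isPreconnected
    have hfanU : AnalyticOnNhd ℂ f Sᶜ := fun z hz => hfan z hz
    have hconstU : AnalyticOnNhd ℂ (fun _ : ℂ => a / c) Sᶜ := fun z _ => analyticAt_const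
    have hw₀U : w₀ ∈ Sᶜ := hw₀T.2
    have hnhds : f =ᶠ[𝓝 w₀] (fun _ => a / c) := by
      apply Filter.eventually_of_mem ((hOo.inter isOpen_compl_singleton).mem_nhds ⟨hw₀O, hw₀ne⟩)
      intro x hx
      exact (hOsub hx).1
    have heq := hfanU.eqOn_of_preconnected_of_eventuallyEq hconstU hSpre hw₀U hnhds
    -- order of f at p
    have hp0 : p - p ∈ latticeSet τ := ⟨0, 0, by simp⟩
    have hfp : (hfm p).order = ((-2 : ℤ) : WithTop ℤ) := by
      have := hford p hp0
      rwa [meromorphicOrderAt_eq (hfm p)] at this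
    have hcongr : (hfm p).order = (MeromorphicAt.const (a / c) p).order := by
      apply mero_order_congr
      filter_upwards [lat_discrete hτ p p] with w hw
      exact heq hw
    by_cases hac : a / c = 0
    · have : (MeromorphicAt.const (a / c) p).order = ⊤ := by
        rw [MeromorphicAt.order_eq_top_iff]
        filter_upwards with w
        simp [hac]
      rw [this] at hcongr
      rw [hfp] at hcongr
      exact absurd hcongr (by simp)
    · have han : (analyticAt_const : AnalyticAt ℂ (fun _ : ℂ => a / c) p).order = 0 :=
        (an_order_zero_iff analyticAt_const).mpr hac
      have : (MeromorphicAt.const (a / c) p).order = 0 :=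
        an_mero_order_zero (analyticAt_const : AnalyticAt ℂ (fun _ : ℂ => a / c) p) hac
      rw [this] at hcongr
      rw [hfp] at hcongr
      exact absurd hcongr (by simp)
  refine ⟨?_, ?_, ?_⟩
  · -- Part 1: order 2 at p-lattice points
    intro z hz
    have hzq : z - q ∉ latticeSet τ := by
      intro hzq
      exact hpq (by simpa [sub_sub_sub_cancel_left] using lat_sub hzq hz :)
    have hgA := hgan z hzq
    have hhA := hhan z hzq
    have hagbA : AnalyticAt ℂ (fun w => a * g w + b) z :=
      (analyticAt_const.mul hgA).add analyticAt_const
    have hfp : (hfm z).order = ((-2 : ℤ) : WithTop ℤ) := by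
      have := hford z hz
      rwa [meromorphicOrderAt_eq (hfm z)] at this
    have hprodm : MeromorphicAt (fun w => f w * (c * g w + d)) z := (hfm z).mul (hhm z)
    have e1 : hprodm.order = (hfm z).order + (hhm z).order :=
      mero_order_mul (hfm z) (hhm z) hprodm
    have e2 : hprodm.order = hagbA.meromorphicAt.order := by
      apply mero_order_congr
      filter_upwards [lat_discrete hτ p z, lat_discrete hτ q z] with w h1 h2
      exact hrel w h1 h2
    have e3 : ((-2 : ℤ) : WithTop ℤ) + (hhm z).order = hagbA.meromorphicAt.order := by
      rw [← hfp, ← e1, e2]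
    have hhz : (hhm z).order = hhA.meromorphicAt.order := rfl
    by_cases hval : a * g z + b = 0
    · exfalso
      -- then h z = 0, so a*d = b*c, contradiction
      have hhzero : c * g z + d = 0 := by
        by_contra hh0
        have h0 : (hhm z).order = 0 := by
          rw [hhz]; exact an_mero_order_zero hhA hh0
        rw [h0, add_zero] at e3
        have hnn := an_mero_order_nonneg hagbA
        rw [← e3] at hnn
        exact absurd hnn (by exact_mod_cast (by omega : ¬ (0:ℤ) ≤ -2))
      exact key (by linear_combination a * hhzero - c * hval)
    · have hagb0 : hagbA.meromorphicAt.order = 0 := an_mero_order_zero hagbA hval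
      rw [hagb0] at e3
      rw [meromorphicOrderAt_eq (hhm z)]
      rcases eq_or_ne (hhm z).order ⊤ with ht | ht
      · rw [ht] at e3
        simp at e3
      · obtain ⟨k, hk⟩ := WithTop.ne_top_iff_exists.mp ht
        rw [← hk] at e3 ⊢
        rw [← WithTop.coe_add] at e3
        have hk2 : (-2 : ℤ) + k = 0 := by exact_mod_cast e3
        rw [WithTop.coe_inj]
        omega
  · -- Part 2
    intro z hz
    rw [meromorphicOrderAt_eq (hhm z)]
    exact part2 z hz
  · -- Part 3: order 0 elsewhere
    intro z hzp hzq
    have hhA := hhan z hzq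
    have hh0 : c * g z + d ≠ 0 := by
      intro hzero
      have hr := hrel z hzp hzq
      rw [hzero, mul_zero] at hr
      exact key (by linear_combination a * hzero + c * hr)
    rw [meromorphicOrderAt_eq (hhm z), (show (hhm z).order = hhA.meromorphicAt.order from rfl)]
    exact an_mero_order_zero hhA hh0
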